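/- Let Σ be the signed complete graph on n ≥ 3 vertices with exactly one negative edge. Then bdim(Σ) = 3. -/

import Mathlib

open Finset

/-- The sign of a real number, as an integer. -/
noncomputable def sgnZ (x : ℝ) : ℤ := if 0 < x then 1 else if x < 0 then -1 else 0

/-- The standard inner product on `ℝ^k`. -/
def dotp {k : ℕ} (a b : Fin k → ℝ) : ℝ := ∑ i, a i * b i

/-- Membership in `Ω^k` where `Ω = {-1,0,1}`. -/
def InOmega {k : ℕ} (a : Fin k → ℝ) : Prop := ∀ i, a i = -1 ∨ a i = 0 ∨ a i = 1

/-- `σ` is a sign function for the graph `G`: symmetric and `±1`-valued on edges,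
so that `(G, σ)` is a signed graph. -/
def IsSignFn {V : Type*} (G : SimpleGraph V) (σ : V → V → ℤ) : Prop :=
  (∀ u v, σ u v = σ v u) ∧ ∀ u v, G.Adj u v → σ u v = 1 ∨ σ u v = -1

/-- `ζ : V → Ω^k` is a vector valued (`k`-)switching function for the signed graph:
`⟨ζ u, ζ v⟩ ≠ 0` for every edge `uv`. -/
def IsSwitching {V : Type*} (G : SimpleGraph V) {k : ℕ} (ζ : V → Fin k → ℝ) : Prop :=
  (∀ v, InOmega (ζ v)) ∧ ∀ u v, G.Adj u v → dotp (ζ u) (ζ v) ≠ 0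

/-- The sign function of the switched signed graph `Σ^ζ`:
`σ^ζ(uv) = σ(uv) · sgn ⟨ζ u, ζ v⟩`. -/
noncomputable def switchSign {V : Type*} (σ : V → V → ℤ) {k : ℕ} (ζ : V → Fin k → ℝ) : V → V → ℤ :=
  fun u v => σ u v * sgnZ (dotp (ζ u) (ζ v))

/-- `ζ : V → Ω^k` is a positive `k`-switching function (a `k`-positive function):
it switches `Σ` to the all positive signed graph. -/
def IsPositive {V : Type*} (G : SimpleGraph V) (σ : V → V → ℤ) {k : ℕ}
    (ζ : V → Fin k → ℝ) : Prop :=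
  (∀ v, InOmega (ζ v)) ∧ ∀ u v, G.Adj u v → switchSign σ ζ u v = 1

/-- The balancing dimension: the least `k ≥ 1` admitting a `k`-positive function. -/
noncomputable def bdim {V : Type*} (G : SimpleGraph V) (σ : V → V → ℤ) : ℕ :=
  sInf {k | 1 ≤ k ∧ ∃ ζ : V → Fin k → ℝ, IsPositive G σ ζ}

/-- The strong balancing dimension: the least `k ≥ 1` admitting an injective
`k`-positive function. -/
noncomputable def sbdim {V : Type*} (G : SimpleGraph V) (σ : V → V → ℤ) : ℕ :=
  sInf {k | 1 ≤ k ∧ ∃ ζ : V → Fin k → ℝ, Function.Injective ζ ∧ IsPositive G σ ζ}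


lemma sgnZ_eq_neg_one' {x : ℝ} (h : sgnZ x = -1) : x < 0 := by
  unfold sgnZ at h
  split_ifs at h with h1 h2
  exact h2

lemma sgnZ_eq_one' {x : ℝ} (h : sgnZ x = 1) : 0 < x := by
  unfold sgnZ at h
  split_ifs at h with h1 h2
  · exact h1
  · exact absurd h (by norm_num)

lemma no_pos_dim_one (a b c : Fin 1 → ℝ)
    (h1 : dotp a b < 0) (h2 : 0 < dotp a c) (h3 : 0 < dotp b c) : False := by
  simp only [dotp, Fin.sum_univ_one] at h1 h2 h3
  nlinarith [mul_neg_of_neg_of_pos h1 (mul_pos h2 h3), sq_nonneg (a 0 * b 0 * c 0)]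

lemma no_pos_dim_two (a b c : Fin 2 → ℝ) (ha : InOmega a) (hb : InOmega b) (hc : InOmega c)
    (h1 : dotp a b < 0) (h2 : 0 < dotp a c) (h3 : 0 < dotp b c) : False := by
  simp only [dotp, Fin.sum_univ_two] at h1 h2 h3
  rcases ha 0 with x|x|x <;> rcases ha 1 with y|y|y <;>
  rcases hb 0 with z|z|z <;> rcases hb 1 with w|w|w <;>
  rcases hc 0 with u|u|u <;> rcases hc 1 with v|v|v <;>
  simp only [x, y, z, w, u, v] at h1 h2 h3 <;> linarith

/-- The signed complete graph on `n ≥ 3` vertices with exactly one negative edge has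
balancing dimension `3`. -/
theorem bdim_complete_one_neg_edge {n : ℕ} (hn : 3 ≤ n) :
    bdim (⊤ : SimpleGraph (Fin n))
      (fun u v => if (u.val = 0 ∧ v.val = 1) ∨ (u.val = 1 ∧ v.val = 0)
        then (-1 : ℤ) else 1) = 3 := by
  set σ : Fin n → Fin n → ℤ := fun u v =>
    if (u.val = 0 ∧ v.val = 1) ∨ (u.val = 1 ∧ v.val = 0) then (-1 : ℤ) else 1 with hσ
  have hmem : 3 ∈ {k | 1 ≤ k ∧ ∃ ζ : Fin n → Fin 3 → ℝ,
      IsPositive (⊤ : SimpleGraph (Fin n)) σ ζ} := by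
    refine ⟨by norm_num, fun v i => if v.val = 0 then (if i.val = 0 then -1 else 1)
        else if v.val = 1 then (if i.val = 2 then -1 else 1) else 1, ?_, ?_⟩
    · intro v i; dsimp only; split_ifs <;> norm_num
    · intro u v huv
      rw [SimpleGraph.top_adj] at huv
      have hval : u.val ≠ v.val := fun h => huv (Fin.ext h)
      unfold switchSign dotp
      simp only [Fin.sum_univ_three]
      by_cases hu0 : u.val = 0 <;> by_cases hu1 : u.val = 1 <;>
        by_cases hv0 : v.val = 0 <;> by_cases hv1 : v.val = 1 <;>
        simp only [hσ, hu0, hu1, hv0, hv1, sgnZ] <;> norm_num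
  have hlb : ∀ k ∈ {k | 1 ≤ k ∧ ∃ ζ : Fin n → Fin k → ℝ,
      IsPositive (⊤ : SimpleGraph (Fin n)) σ ζ}, 3 ≤ k := by
    rintro k ⟨hk1, ζ, hΩ, hpos⟩
    by_contra hlt
    push_neg at hlt
    set u0 : Fin n := ⟨0, by omega⟩ with hu0
    set u1 : Fin n := ⟨1, by omega⟩ with hu1
    set u2 : Fin n := ⟨2, by omega⟩ with hu2
    have p01 := hpos u0 u1 (by simp [hu0, hu1, Fin.ext_iff])
    have p02 := hpos u0 u2 (by simp [hu0, hu2, Fin.ext_iff])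
    have p12 := hpos u1 u2 (by simp [hu1, hu2, Fin.ext_iff])
    have e01 : σ u0 u1 = -1 := by simp [hσ, hu0, hu1]
    have e02 : σ u0 u2 = 1 := by simp [hσ, hu0, hu2]
    have e12 : σ u1 u2 = 1 := by simp [hσ, hu1, hu2]
    unfold switchSign at p01 p02 p12
    rw [e01] at p01; rw [e02] at p02; rw [e12] at p12
    have d01 : dotp (ζ u0) (ζ u1) < 0 := sgnZ_eq_neg_one' (by omega)
    have d02 : 0 < dotp (ζ u0) (ζ u2) := sgnZ_eq_one' (by omega)
    have d12 : 0 < dotp (ζ u1) (ζ u2) := sgnZ_eq_one' (by omega)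
    interval_cases k
    · exact no_pos_dim_one _ _ _ d01 d02 d12
    · exact no_pos_dim_two _ _ _ (hΩ u0) (hΩ u1) (hΩ u2) d01 d02 d12
  unfold bdim
  exact le_antisymm (Nat.sInf_le hmem) (hlb _ (Nat.sInf_mem ⟨3, hmem⟩))
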